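/- With the notation of the context, assume φ_a = 0 for all a, and additionally give real numbers R_{ab} (a,b ∈ {m̄+1,…,n}), κ_{b0}, κ_{bα}, ψᴬ_b, h_0, h_α. Define covectors χ_b, θ ∈ E* by: χ_b(Y_0) = κ_{b0}, χ_b(Y_α) = κ_{bα}, χ_b(P⁰) = 0, χ_b(Pᴬ) = ψᴬ_b, χ_b(Pᵃ) = δ_{ab}, χ_b(V_a) = −R_{ab}; and θ(Y_0) = h_0, θ(Y_α) = h_α, θ(P⁰) = 1, θ(Pᴬ) = βᴬ, θ(Pᵃ) = βᵃ, θ(V_a) = 0. Let T = (∩_b ker χ_b) ∩ ker θ. Then the restricted pair satisfies ker(Ω|_T) ∩ ker(η|_T) = {0} if and only if det(R_{ab}) ≠ 0. -/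
import Mathlib


/-- A vector of the space `E` with basis `{Y₀, Y_α, P⁰, Pᵅ, V_a}`; see Statement 7. -/
structure EVec (mb k : ℕ) where
  y0 : ℝ
  y : Fin mb ⊕ Fin k → ℝ
  p0 : ℝ
  p : Fin mb ⊕ Fin k → ℝ
  v : Fin k → ℝ

/-- Assume `φ_a = 0`.  With the covectors `χ_b` (differentials of the
constraints cutting out `W₁`) and `θ` (differential of the Pontryagin Hamiltonian)
given componentwise as in the statement, and `T = (∩_b ker χ_b) ∩ ker θ`, the
restricted pair satisfies `ker(Ω|_T) ∩ ker(η|_T) = {0}` iff `det(R_{ab}) ≠ 0`. -/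
theorem stmt_9 (mb k : ℕ) (hn : 1 ≤ mb + k)
    (Γ : Fin mb ⊕ Fin k → ℝ)
    (s : (Fin mb ⊕ Fin k) → (Fin mb ⊕ Fin k) → ℝ)
    (hs : ∀ α β, s α β = - s β α)
    (bb : Fin mb ⊕ Fin k → ℝ) (φ : Fin k → ℝ)
    (hφ : ∀ a, φ a = 0)
    (R : Fin k → Fin k → ℝ)
    (κ0 : Fin k → ℝ) (κ : Fin k → (Fin mb ⊕ Fin k) → ℝ)
    (ψ : Fin mb → Fin k → ℝ)
    (h0 : ℝ) (hv : Fin mb ⊕ Fin k → ℝ)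
    (Ω : EVec mb k → EVec mb k → ℝ)
    (hΩ : ∀ u v, Ω u v =
      (∑ α, (u.y α * v.p α - v.y α * u.p α))
      + (∑ α, Γ α * (u.y α * v.y0 - v.y α * u.y0))
      + (∑ A, bb (Sum.inl A) * (u.p (Sum.inl A) * v.y0 - v.p (Sum.inl A) * u.y0))
      + (∑ a, bb (Sum.inr a) * (u.p (Sum.inr a) * v.y0 - v.p (Sum.inr a) * u.y0))
      + (1 / 2) * (∑ α, ∑ β, s α β * (u.y α * v.y β - v.y α * u.y β))
      + (∑ a, φ a * (u.v a * v.y0 - v.v a * u.y0)))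
    (η : EVec mb k → ℝ) (hη : ∀ u, η u = u.y0)
    (χ : Fin k → EVec mb k → ℝ)
    (hχ : ∀ b u, χ b u =
      κ0 b * u.y0 + (∑ α, κ b α * u.y α)
      + (∑ A, ψ A b * u.p (Sum.inl A)) + u.p (Sum.inr b)
      - ∑ a, R a b * u.v a)
    (θ : EVec mb k → ℝ)
    (hθ : ∀ u, θ u =
      h0 * u.y0 + (∑ α, hv α * u.y α) + u.p0 + ∑ α, bb α * u.p α) :
    (∀ u : EVec mb k, (∀ b, χ b u = 0) → θ u = 0 →
        (∀ w : EVec mb k, (∀ b, χ b w = 0) → θ w = 0 → Ω u w = 0) →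
        η u = 0 → u = ⟨0, 0, 0, 0, 0⟩)
    ↔ (Matrix.of R).det ≠ 0 := by
  constructor
  · -- the cosymplectic condition implies det ≠ 0
    intro H
    by_contra hdet
    obtain ⟨v, hv0, hvR⟩ := Matrix.exists_vecMul_eq_zero_iff.mpr hdet
    have h1 : ∀ b, χ b (⟨0, 0, 0, 0, v⟩ : EVec mb k) = 0 := by
      intro b
      have hb := congrFun hvR b
      simp only [Matrix.vecMul, dotProduct, Matrix.of_apply, Pi.zero_apply] at hb
      simp only [hχ]
      simpa [mul_comm] using hb
    have h2 : θ (⟨0, 0, 0, 0, v⟩ : EVec mb k) = 0 := by simp [hθ]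
    have h3 : ∀ w : EVec mb k, (∀ b, χ b w = 0) → θ w = 0 →
        Ω (⟨0, 0, 0, 0, v⟩ : EVec mb k) w = 0 := by
      intro w _ _
      simp [hΩ, hφ]
    have h4 : η (⟨0, 0, 0, 0, v⟩ : EVec mb k) = 0 := by simp [hη]
    have := H _ h1 h2 h3 h4
    simp only [EVec.mk.injEq] at this
    exact hv0 this.2.2.2.2
  · -- det ≠ 0 implies the cosymplectic condition
    intro hdet u hχu hθu hΩu hηu
    have hy0 : u.y0 = 0 := by rw [← hη u]; exact hηu
    -- Step 1: the `inr` components of u.y vanish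
    have step1 : ∀ b, u.y (Sum.inr b) = 0 := by
      have hmv : (Matrix.of R).mulVec (fun b => u.y (Sum.inr b)) = 0 := by
        funext a
        have hχw : ∀ b, χ b (⟨0, 0, -(∑ b, bb (Sum.inr b) * R a b),
            Sum.elim 0 (fun b => R a b), Pi.single a 1⟩ : EVec mb k) = 0 := by
          intro b
          simp [hχ, Pi.single_apply, mul_ite, Finset.sum_ite_eq']
        have hθw : θ (⟨0, 0, -(∑ b, bb (Sum.inr b) * R a b),
            Sum.elim 0 (fun b => R a b), Pi.single a 1⟩ : EVec mb k) = 0 := by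
          simp [hθ, Fintype.sum_sum_type]
        have hΩw := hΩu _ hχw hθw
        rw [hΩ] at hΩw
        simp only [hφ, hy0, Fintype.sum_sum_type, Sum.elim_inl, Sum.elim_inr,
          Pi.zero_apply, mul_zero, zero_mul, sub_zero, zero_sub, mul_neg, neg_zero,
          Finset.sum_const_zero, add_zero, zero_add, sub_self] at hΩw
        simpa [Matrix.mulVec, dotProduct, mul_comm] using hΩw
      intro b
      exact congrFun (Matrix.eq_zero_of_mulVec_eq_zero hdet hmv) b
    -- Step 2: the `inl` components of u.y vanish
    have step2 : ∀ A, u.y (Sum.inl A) = 0 := by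
      intro A
      have hχw : ∀ b, χ b (⟨0, 0, -bb (Sum.inl A) + ∑ b, bb (Sum.inr b) * ψ A b,
          Sum.elim (Pi.single A 1) (fun b => -(ψ A b)), 0⟩ : EVec mb k) = 0 := by
        intro b
        simp [hχ, Pi.single_apply, mul_ite, Finset.sum_ite_eq']
      have hθw : θ (⟨0, 0, -bb (Sum.inl A) + ∑ b, bb (Sum.inr b) * ψ A b,
          Sum.elim (Pi.single A 1) (fun b => -(ψ A b)), 0⟩ : EVec mb k) = 0 := by
        simp [hθ, Fintype.sum_sum_type, Pi.single_apply, mul_ite, Finset.sum_ite_eq']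
        ring
      have hΩw := hΩu _ hχw hθw
      rw [hΩ] at hΩw
      simp only [hφ, hy0, Fintype.sum_sum_type, Sum.elim_inl, Sum.elim_inr,
        Pi.zero_apply, mul_zero, zero_mul, sub_zero, zero_sub, mul_neg, neg_zero,
        Finset.sum_const_zero, add_zero, zero_add, sub_self,
        Pi.single_apply, mul_ite, mul_one, Finset.sum_ite_eq'] at hΩw
      simpa [step1] using hΩw
    have hy : u.y = 0 := by
      funext α
      cases α with
      | inl A => exact step2 A
      | inr b => exact step1 b
    -- Step 3: u.p vanishes
    have step3 : ∀ α0, u.p α0 = 0 := by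
      intro α0
      have hχw : ∀ b, χ b (⟨0, Pi.single α0 1, -hv α0 + ∑ b, bb (Sum.inr b) * κ b α0,
          Sum.elim 0 (fun b => -(κ b α0)), 0⟩ : EVec mb k) = 0 := by
        intro b
        simp [hχ, Pi.single_apply, mul_ite, Finset.sum_ite_eq']
      have hθw : θ (⟨0, Pi.single α0 1, -hv α0 + ∑ b, bb (Sum.inr b) * κ b α0,
          Sum.elim 0 (fun b => -(κ b α0)), 0⟩ : EVec mb k) = 0 := by
        simp [hθ, Fintype.sum_sum_type, Pi.single_apply, mul_ite, Finset.sum_ite_eq']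
      have hΩw := hΩu _ hχw hθw
      rw [hΩ] at hΩw
      simp only [hφ, hy0, hy, Pi.zero_apply, mul_zero, zero_mul, sub_zero, zero_sub,
        mul_neg, neg_zero, Finset.sum_const_zero, add_zero, zero_add, sub_self,
        sub_eq_zero, Pi.single_apply, mul_ite, one_mul, ite_mul, Finset.sum_ite_eq',
        neg_eq_zero] at hΩw
      simpa using hΩw
    have hp : u.p = 0 := funext step3
    -- Step 4: u.v vanishes
    have hvv : u.v = 0 := by
      have hmv : (Matrix.of R).transpose.mulVec u.v = 0 := by
        funext b
        have := hχu b
        rw [hχ] at this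
        simp only [hy0, hy, hp, Pi.zero_apply, mul_zero, Finset.sum_const_zero,
          add_zero, zero_add, zero_sub, neg_eq_zero] at this
        simpa [Matrix.mulVec, dotProduct] using this
      have hdt : (Matrix.of R).transpose.det ≠ 0 := by rwa [Matrix.det_transpose]
      exact Matrix.eq_zero_of_mulVec_eq_zero hdt hmv
    -- Step 5: u.p0 vanishes
    have hp0 : u.p0 = 0 := by
      have := hθu
      rw [hθ] at this
      simpa [hy0, hy, hp] using this
    cases u with
    | mk y0' y' p0' p' v' =>
      simp only [EVec.mk.injEq]
      exact ⟨hy0, hy, hp0, hp, hvv⟩
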